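/- Let n ≥ 1, γ ∈ (0,1), q_max ∈ (0,1), d_max ∈ (0,1), and suppose for each t ∈ {1,…,n} that q_t ∈ (0,1) and d_t ∈ (0,1) with q_t ≤ q_max and d_t ≤ d_max. If d_max < 1/(1 + ((1/γ) - 1)·(q_max/(1-q_max))), then (Σ_{t=1}^n q_t·d_t) / (Σ_{t=1}^n (q_t·d_t + (1-q_t)(1-d_t))) < γ. -/
import Mathlib


theorem stmt_10 (n : ℕ) (hn : 1 ≤ n) (γ qmax dmax : ℝ)
    (hg0 : 0 < γ) (hg1 : γ < 1) (hqm0 : 0 < qmax) (hqm1 : qmax < 1)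
    (hdm0 : 0 < dmax) (hdm1 : dmax < 1)
    (q d : Fin n → ℝ)
    (hq0 : ∀ t, 0 < q t) (hq1 : ∀ t, q t < 1)
    (hd0 : ∀ t, 0 < d t) (hd1 : ∀ t, d t < 1)
    (hqle : ∀ t, q t ≤ qmax) (hdle : ∀ t, d t ≤ dmax)
    (hbound : dmax < 1 / (1 + ((1 / γ) - 1) * (qmax / (1 - qmax)))) :
    (∑ t, q t * d t) / (∑ t, (q t * d t + (1 - q t) * (1 - d t))) < γ := by
  set K : ℝ := (1 / γ - 1) * (qmax / (1 - qmax)) with hKdef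
  have h1q : 0 < 1 - qmax := by linarith
  have h1d : 0 < 1 - dmax := by linarith
  have hKpos : 0 < K := by
    apply mul_pos
    · have : 1 < 1 / γ := (one_lt_div hg0).mpr hg1
      linarith
    · positivity
  have h1K : 0 < 1 + K := by linarith
  have hb : dmax * (1 + K) < 1 := (lt_div_iff₀ h1K).mp hbound
  have hKeq : K * (γ * (1 - qmax)) = (1 - γ) * qmax := by
    rw [hKdef]; field_simp
  have key : (1 - γ) * (qmax * dmax) < γ * ((1 - qmax) * (1 - dmax)) := by
    nlinarith [mul_pos hg0 h1q, mul_pos hKpos hg0]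
  have hterm : ∀ t : Fin n, q t * d t < γ * (q t * d t + (1 - q t) * (1 - d t)) := by
    intro t
    have h1 := hq0 t; have h2 := hq1 t; have h3 := hd0 t; have h4 := hd1 t
    have h5 := hqle t; have h6 := hdle t
    have hqd : q t * d t ≤ qmax * dmax := by nlinarith
    have hcd : (1 - qmax) * (1 - dmax) ≤ (1 - q t) * (1 - d t) := by nlinarith
    nlinarith
  have hne : (Finset.univ : Finset (Fin n)).Nonempty := by
    have : Nonempty (Fin n) := Fin.pos_iff_nonempty.mp hn
    exact Finset.univ_nonempty
  have hsum : (∑ t, q t * d t) < γ * (∑ t, (q t * d t + (1 - q t) * (1 - d t))) := by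
    rw [Finset.mul_sum]
    exact Finset.sum_lt_sum_of_nonempty hne fun t _ => hterm t
  have hden : 0 < ∑ t, (q t * d t + (1 - q t) * (1 - d t)) := by
    apply Finset.sum_pos _ hne
    intro t _
    have h1 := hq0 t; have h2 := hq1 t; have h3 := hd0 t; have h4 := hd1 t
    nlinarith
  rw [div_lt_iff₀ hden]
  linarith [hsum]
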